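/- arXiv:1207.0954 — 2 statements merged into one kernel-verified Lean document; each statement's English description precedes it below -/
import Mathlib

section
/- Suppose Q is large enough that σ_Q^{-1/n} A ⊂ (0,1]^n. Then for any x ∈ R^n, the number of Farey points of level Q in the translated scaled set x + σ_Q^{-1/n} A + Z^n modulo Z^n equals the number of primitive integer vectors m ∈ Ẑ^{n+1} with m·h(x)·a(Q) ∈ C(A). -/
open Matrix Pointwise

noncomputable def zetaR (s : ℕ) : ℝ := ∑' k : ℕ, (1 : ℝ) / (k + 1) ^ s

noncomputable def sigma (n : ℕ) (Q : ℝ) : ℝ := Q ^ (n + 1) / ((n + 1) * zetaR (n + 1))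

def FareySet (n Q : ℕ) : Set (Fin n → ℝ) :=
  {x | ∃ (p : Fin n → ℤ) (q : ℤ), 0 < q ∧ q ≤ Q ∧
    Finset.univ.gcd (Fin.snoc p q : Fin (n + 1) → ℤ) = 1 ∧
    (∀ i, x i = p i / q) ∧ (∀ i, 0 ≤ x i ∧ x i < 1)}

noncomputable def hMat (n : ℕ) (x : Fin n → ℝ) : Matrix (Fin (n + 1)) (Fin (n + 1)) ℝ :=
  (Matrix.fromBlocks (1 : Matrix (Fin n) (Fin n) ℝ) 0
      (Matrix.of fun _ j => -x j : Matrix (Fin 1) (Fin n) ℝ)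
      (1 : Matrix (Fin 1) (Fin 1) ℝ)).submatrix
    finSumFinEquiv.symm finSumFinEquiv.symm

noncomputable def aMat (n : ℕ) (y : ℝ) : Matrix (Fin (n + 1)) (Fin (n + 1)) ℝ :=
  (Matrix.fromBlocks (y ^ ((1 : ℝ) / n) • (1 : Matrix (Fin n) (Fin n) ℝ)) 0 0
      (y⁻¹ • (1 : Matrix (Fin 1) (Fin 1) ℝ))).submatrix
    finSumFinEquiv.symm finSumFinEquiv.symm

noncomputable def Cone (n : ℕ) (A : Set (Fin n → ℝ)) : Set (Fin (n + 1) → ℝ) :=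
  {v | 0 < v (Fin.last n) ∧ v (Fin.last n) ≤ 1 ∧
    (fun i : Fin n => v i.castSucc) ∈
      ((sigma n 1) ^ (-(1 : ℝ) / n) * v (Fin.last n)) • A}

/-! ### Auxiliary lemmas -/

lemma zetaR_pos' (n : ℕ) (hn : 1 ≤ n) : 0 < zetaR (n + 1) := by
  have hsum : Summable (fun k : ℕ => (1 : ℝ) / ((k : ℝ) + 1) ^ (n + 1)) := by
    have h1 := (Real.summable_one_div_nat_pow (p := n + 1)).2 (by omega)
    have h2 := (summable_nat_add_iff 1).2 h1
    convert h2 using 2 with k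
    · rfl
    push_cast
    ring
  exact Summable.tsum_pos hsum (fun k => by positivity) 0 (by positivity)

lemma sigma_pos' (n : ℕ) (hn : 1 ≤ n) {Q : ℝ} (hQ : 0 < Q) : 0 < sigma n Q := by
  have := zetaR_pos' n hn
  unfold sigma
  positivity

lemma sigma_scale' (n Q : ℕ) (hn : 1 ≤ n) (hQ : 1 ≤ Q) :
    (Q : ℝ) ^ ((1 : ℝ) / n) * (sigma n (Q : ℝ)) ^ (-(1 : ℝ) / n) =
      (sigma n 1) ^ (-(1 : ℝ) / n) / Q := by
  have hn' : (n : ℝ) ≠ 0 := Nat.cast_ne_zero.2 (by omega)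
  have hQ0 : (0 : ℝ) < Q := by exact_mod_cast hQ
  have h1 : 0 < sigma n 1 := sigma_pos' n hn one_pos
  have hfac : sigma n (Q : ℝ) = (Q : ℝ) ^ (n + 1) * sigma n 1 := by
    unfold sigma; rw [one_pow]; ring
  rw [hfac, Real.mul_rpow (by positivity) h1.le, ← Real.rpow_natCast (Q : ℝ) (n + 1),
    ← Real.rpow_mul hQ0.le, ← mul_assoc, ← Real.rpow_add hQ0]
  have he : (1 : ℝ) / n + (n + 1 : ℕ) * (-(1 : ℝ) / n) = -1 := by
    push_cast; field_simp; ring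
  rw [he, Real.rpow_neg_one]
  ring

lemma int_gcd_nonneg' {ι : Type*} (s : Finset ι) (f : ι → ℤ) : 0 ≤ s.gcd f :=
  Int.nonneg_of_normalize_eq_self (Finset.normalize_gcd)

lemma gcd_snoc_add' (n : ℕ) (p k : Fin n → ℤ) (q : ℤ) :
    Finset.univ.gcd (Fin.snoc (fun i => p i + q * k i) q : Fin (n + 1) → ℤ) =
      Finset.univ.gcd (Fin.snoc p q : Fin (n + 1) → ℤ) := by
  have hq1 : (Finset.univ.gcd (Fin.snoc (fun i => p i + q * k i) q : Fin (n + 1) → ℤ)) ∣ q := by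
    have := Finset.gcd_dvd (f := (Fin.snoc (fun i => p i + q * k i) q : Fin (n + 1) → ℤ))
      (Finset.mem_univ (Fin.last n))
    rwa [Fin.snoc_last] at this
  have hq2 : (Finset.univ.gcd (Fin.snoc p q : Fin (n + 1) → ℤ)) ∣ q := by
    have := Finset.gcd_dvd (f := (Fin.snoc p q : Fin (n + 1) → ℤ)) (Finset.mem_univ (Fin.last n))
    rwa [Fin.snoc_last] at this
  apply Int.dvd_antisymm (int_gcd_nonneg' _ _) (int_gcd_nonneg' _ _)
  · apply Finset.dvd_gcd
    intro i _
    refine Fin.lastCases ?_ ?_ i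
    · rwa [Fin.snoc_last]
    · intro j
      rw [Fin.snoc_castSucc]
      have hp : (Finset.univ.gcd (Fin.snoc (fun i => p i + q * k i) q : Fin (n + 1) → ℤ)) ∣
          p j + q * k j := by
        have := Finset.gcd_dvd (f := (Fin.snoc (fun i => p i + q * k i) q : Fin (n + 1) → ℤ))
          (Finset.mem_univ (Fin.castSucc j))
        rwa [Fin.snoc_castSucc] at this
      have heq : p j = (p j + q * k j) - q * k j := by ring
      rw [heq]
      exact dvd_sub hp (Dvd.dvd.mul_right hq1 _)
  · apply Finset.dvd_gcd
    intro i _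
    refine Fin.lastCases ?_ ?_ i
    · rwa [Fin.snoc_last]
    · intro j
      rw [Fin.snoc_castSucc]
      have hp : (Finset.univ.gcd (Fin.snoc p q : Fin (n + 1) → ℤ)) ∣ p j := by
        have := Finset.gcd_dvd (f := (Fin.snoc p q : Fin (n + 1) → ℤ))
          (Finset.mem_univ (Fin.castSucc j))
        rwa [Fin.snoc_castSucc] at this
      exact dvd_add hp (Dvd.dvd.mul_right hq2 _)

lemma fract_unique' {a b c : ℝ} (h : Int.fract a = Int.fract b) (ha1 : c < a) (ha2 : a ≤ c + 1)
    (hb1 : c < b) (hb2 : b ≤ c + 1) : a = b := by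
  have hab : a - b = ((⌊a⌋ - ⌊b⌋ : ℤ) : ℝ) := by
    have h1 : Int.fract a = a - ⌊a⌋ := rfl
    have h2 : Int.fract b = b - ⌊b⌋ := rfl
    push_cast
    rw [h1, h2] at h
    linarith
  have habs : |((⌊a⌋ - ⌊b⌋ : ℤ) : ℝ)| < 1 := by
    rw [← hab, abs_lt]
    constructor <;> linarith
  have h3 : |(⌊a⌋ - ⌊b⌋ : ℤ)| < 1 := by exact_mod_cast habs
  have h4 : (⌊a⌋ - ⌊b⌋ : ℤ) = 0 := by
    rcases abs_lt.1 h3 with ⟨hl, hr⟩; omega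
  have h5 : ((⌊a⌋ - ⌊b⌋ : ℤ) : ℝ) = 0 := by exact_mod_cast h4
  linarith [hab, h5]

lemma symm_last' (n : ℕ) : finSumFinEquiv.symm (Fin.last n) = Sum.inr (0 : Fin 1) := by
  rw [Equiv.symm_apply_eq]; ext; simp

lemma symm_castSucc' (n : ℕ) (i : Fin n) :
    finSumFinEquiv.symm (Fin.castSucc i) = Sum.inl i := by
  rw [Equiv.symm_apply_eq]; ext; simp

lemma natAdd_zero_eq' (n : ℕ) : (Fin.natAdd n (0 : Fin 1)) = Fin.last n := by ext; simp

lemma castAdd_one_eq' (n : ℕ) (i : Fin n) : Fin.castAdd 1 i = i.castSucc := by ext; simp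

theorem vecMul_hMat' (n : ℕ) (x : Fin n → ℝ) (c : Fin (n + 1) → ℝ) :
    Matrix.vecMul c (hMat n x) =
      Fin.snoc (fun j => c j.castSucc - c (Fin.last n) * x j) (c (Fin.last n)) := by
  funext j
  rw [hMat, submatrix_vecMul_equiv]
  simp only [Function.comp_apply, vecMul_fromBlocks]
  refine Fin.lastCases ?_ ?_ j
  · rw [symm_last']
    simp [vecMul, dotProduct, Fin.snoc_last, natAdd_zero_eq']
  · intro i
    rw [symm_castSucc']
    simp [vecMul, dotProduct, Fin.snoc_castSucc, natAdd_zero_eq', castAdd_one_eq']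
    ring

theorem vecMul_aMat' (n : ℕ) (y : ℝ) (c : Fin (n + 1) → ℝ) :
    Matrix.vecMul c (aMat n y) =
      Fin.snoc (fun j => y ^ ((1 : ℝ) / n) * c j.castSucc) (y⁻¹ * c (Fin.last n)) := by
  funext j
  rw [aMat, submatrix_vecMul_equiv]
  simp only [Function.comp_apply, vecMul_fromBlocks]
  refine Fin.lastCases ?_ ?_ j
  · rw [symm_last']
    simp [vecMul, dotProduct, Fin.snoc_last, natAdd_zero_eq']
    ring
  · intro i
    rw [symm_castSucc']
    simp [vecMul, dotProduct, Fin.snoc_castSucc, natAdd_zero_eq', castAdd_one_eq',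
      Matrix.one_apply, mul_ite, mul_zero, mul_one]
    ring

theorem vecMul_hMat_aMat' (n : ℕ) (x : Fin n → ℝ) (y : ℝ) (c : Fin (n + 1) → ℝ) :
    Matrix.vecMul c (hMat n x * aMat n y) =
      Fin.snoc (fun j => y ^ ((1 : ℝ) / n) * (c j.castSucc - c (Fin.last n) * x j))
        (y⁻¹ * c (Fin.last n)) := by
  rw [← Matrix.vecMul_vecMul, vecMul_hMat', vecMul_aMat']
  funext j
  refine Fin.lastCases ?_ ?_ j <;> simp


lemma cone_third_iff' (n Q : ℕ) (hn : 1 ≤ n) (hQpos : 1 ≤ Q) (A : Set (Fin n → ℝ))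
    (x : Fin n → ℝ) (m : Fin (n + 1) → ℤ) (hq : (0 : ℝ) < (m (Fin.last n) : ℝ)) :
    ((fun i : Fin n => (Q : ℝ) ^ ((1 : ℝ) / n) *
        ((m i.castSucc : ℝ) - (m (Fin.last n) : ℝ) * x i)) ∈
      ((sigma n 1) ^ (-(1 : ℝ) / n) * ((Q : ℝ)⁻¹ * (m (Fin.last n) : ℝ))) • A) ↔
      (fun j : Fin n => (m j.castSucc : ℝ) / (m (Fin.last n) : ℝ)) ∈
        x +ᵥ ((sigma n (Q : ℝ)) ^ (-(1 : ℝ) / n) • A) := by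
  have hQ0 : (0 : ℝ) < Q := by exact_mod_cast hQpos
  have hs1 : (0 : ℝ) < (sigma n 1) ^ (-(1 : ℝ) / n) :=
    Real.rpow_pos_of_pos (sigma_pos' n hn one_pos) _
  have hsQ : (0 : ℝ) < (sigma n (Q : ℝ)) ^ (-(1 : ℝ) / n) :=
    Real.rpow_pos_of_pos (sigma_pos' n hn hQ0) _
  have key := sigma_scale' n Q hn hQpos
  have hs1' : (sigma n 1) ^ (-(1 : ℝ) / n) =
      (Q : ℝ) ^ ((1 : ℝ) / n) * (sigma n (Q : ℝ)) ^ (-(1 : ℝ) / n) * Q := by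
    rw [key]; field_simp
  rw [Set.mem_vadd_set_iff_neg_vadd_mem,
    Set.mem_smul_set_iff_inv_smul_mem₀ (ne_of_gt hsQ),
    Set.mem_smul_set_iff_inv_smul_mem₀ (by positivity)]
  have hQn : (0 : ℝ) < (Q : ℝ) ^ ((1 : ℝ) / n) := Real.rpow_pos_of_pos hQ0 _
  have hfe : (((sigma n 1) ^ (-(1 : ℝ) / n) * ((Q : ℝ)⁻¹ * (m (Fin.last n) : ℝ)))⁻¹ •
      fun i : Fin n => (Q : ℝ) ^ ((1 : ℝ) / n) *
        ((m i.castSucc : ℝ) - (m (Fin.last n) : ℝ) * x i)) =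
      ((sigma n (Q : ℝ)) ^ (-(1 : ℝ) / n))⁻¹ •
        (-x +ᵥ fun j : Fin n => (m j.castSucc : ℝ) / (m (Fin.last n) : ℝ)) := by
    funext i
    have hv : (-x +ᵥ fun j : Fin n => (m j.castSucc : ℝ) / (m (Fin.last n) : ℝ)) i =
        -x i + (m i.castSucc : ℝ) / (m (Fin.last n) : ℝ) := rfl
    simp only [Pi.smul_apply, smul_eq_mul, hv]
    rw [hs1']
    field_simp
    ring
  rw [hfe]

lemma mem_cone_iff' (n Q : ℕ) (hn : 1 ≤ n) (hQpos : 1 ≤ Q) (A : Set (Fin n → ℝ))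
    (x : Fin n → ℝ) (m : Fin (n + 1) → ℤ) :
    Matrix.vecMul (fun i => (m i : ℝ)) (hMat n x * aMat n (Q : ℝ)) ∈ Cone n A ↔
      0 < m (Fin.last n) ∧ m (Fin.last n) ≤ (Q : ℤ) ∧
        (fun j : Fin n => (m j.castSucc : ℝ) / (m (Fin.last n) : ℝ)) ∈
          x +ᵥ ((sigma n (Q : ℝ)) ^ (-(1 : ℝ) / n) • A) := by
  have hQ0 : (0 : ℝ) < Q := by exact_mod_cast hQpos
  have hs1 : (0 : ℝ) < (sigma n 1) ^ (-(1 : ℝ) / n) :=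
    Real.rpow_pos_of_pos (sigma_pos' n hn one_pos) _
  have hsQ : (0 : ℝ) < (sigma n (Q : ℝ)) ^ (-(1 : ℝ) / n) :=
    Real.rpow_pos_of_pos (sigma_pos' n hn hQ0) _
  have key := sigma_scale' n Q hn hQpos
  rw [vecMul_hMat_aMat']
  simp only [Cone, Set.mem_setOf_eq, Fin.snoc_last, Fin.snoc_castSucc]
  constructor
  · rintro ⟨h1, h2, h3⟩
    have hq : (0 : ℝ) < (m (Fin.last n) : ℝ) := by
      by_contra hc
      push_neg at hc
      nlinarith [inv_pos.2 hQ0]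
    have hqZ : 0 < m (Fin.last n) := by exact_mod_cast hq
    have hqQ : m (Fin.last n) ≤ (Q : ℤ) := by
      have h2' := mul_le_mul_of_nonneg_left h2 hQ0.le
      rw [mul_one, ← mul_assoc, mul_inv_cancel₀ (ne_of_gt hQ0), one_mul] at h2'
      exact_mod_cast h2'
    exact ⟨hqZ, hqQ, (cone_third_iff' n Q hn hQpos A x m hq).1 h3⟩
  · rintro ⟨hqZ, hqQ, h3⟩
    have hq : (0 : ℝ) < (m (Fin.last n) : ℝ) := by exact_mod_cast hqZ
    refine ⟨by positivity, ?_, (cone_third_iff' n Q hn hQpos A x m hq).2 h3⟩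
    have hle : (m (Fin.last n) : ℝ) ≤ (Q : ℝ) := by exact_mod_cast hqQ
    calc (Q : ℝ)⁻¹ * (m (Fin.last n) : ℝ) ≤ (Q : ℝ)⁻¹ * (Q : ℝ) :=
          mul_le_mul_of_nonneg_left hle (inv_pos.2 hQ0).le
      _ = 1 := inv_mul_cancel₀ (ne_of_gt hQ0)

/-- if σ_Q^{-1/n}A ⊂ (0,1]^n then the number of Farey points of level Q in
x + σ_Q^{-1/n}A + ℤ^n equals the number of primitive integer vectors m ∈ Ẑ^{n+1} with
m·h(x)·a(Q) ∈ C(A). -/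
theorem farey_counting_identity (n Q : ℕ) (hn : 1 ≤ n) (hQpos : 1 ≤ Q)
    (A : Set (Fin n → ℝ)) (x : Fin n → ℝ)
    (hQ : (sigma n Q) ^ (-(1 : ℝ) / n) • A ⊆ {y : Fin n → ℝ | ∀ i, 0 < y i ∧ y i ≤ 1}) :
    {r | r ∈ FareySet n Q ∧
        ∃ m : Fin n → ℤ, (fun i => r i + m i) ∈ x +ᵥ ((sigma n Q) ^ (-(1 : ℝ) / n) • A)}.ncard =
      {m : Fin (n + 1) → ℤ | m ≠ 0 ∧ Finset.univ.gcd m = 1 ∧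
        Matrix.vecMul (fun i => (m i : ℝ)) (hMat n x * aMat n (Q : ℝ)) ∈ Cone n A}.ncard := by
  classical
  have hQ0 : (0 : ℝ) < Q := by exact_mod_cast hQpos
  set S : Set (Fin n → ℝ) := (sigma n Q) ^ (-(1 : ℝ) / n) • A with hS
  set g : (Fin (n + 1) → ℤ) → (Fin n → ℝ) :=
    fun m i => Int.fract ((m i.castSucc : ℝ) / (m (Fin.last n) : ℝ)) with hgdef
  set R : Set (Fin (n + 1) → ℤ) := {m : Fin (n + 1) → ℤ | m ≠ 0 ∧ Finset.univ.gcd m = 1 ∧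
    Matrix.vecMul (fun i => (m i : ℝ)) (hMat n x * aMat n (Q : ℝ)) ∈ Cone n A} with hRdef
  -- basic facts about members of R
  have hRfacts : ∀ m ∈ R, 0 < m (Fin.last n) ∧ m (Fin.last n) ≤ (Q : ℤ) ∧
      (fun j : Fin n => (m j.castSucc : ℝ) / (m (Fin.last n) : ℝ)) ∈ x +ᵥ S := by
    intro m hm
    exact (mem_cone_iff' n Q hn hQpos A x m).1 hm.2.2
  have hbound : ∀ m ∈ R, ∀ j : Fin n,
      x j < (m j.castSucc : ℝ) / (m (Fin.last n) : ℝ) ∧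
        (m j.castSucc : ℝ) / (m (Fin.last n) : ℝ) ≤ x j + 1 := by
    intro m hm j
    obtain ⟨-, -, hu⟩ := hRfacts m hm
    rw [Set.mem_vadd_set_iff_neg_vadd_mem] at hu
    have hb := hQ hu j
    have hval : ((-x) +ᵥ fun j : Fin n => (m j.castSucc : ℝ) / (m (Fin.last n) : ℝ)) j =
        -x j + (m j.castSucc : ℝ) / (m (Fin.last n) : ℝ) := rfl
    rw [hval] at hb
    constructor <;> linarith [hb.1, hb.2]
  -- injectivity
  have hinj : Set.InjOn g R := by
    intro m hm m' hm' hgm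
    obtain ⟨hq0, hqQ, hu⟩ := hRfacts m hm
    obtain ⟨hq0', hqQ', hu'⟩ := hRfacts m' hm'
    have hqr : (0 : ℝ) < (m (Fin.last n) : ℝ) := by exact_mod_cast hq0
    have hqr' : (0 : ℝ) < (m' (Fin.last n) : ℝ) := by exact_mod_cast hq0'
    have hueq : ∀ j : Fin n, (m j.castSucc : ℝ) / (m (Fin.last n) : ℝ) =
        (m' j.castSucc : ℝ) / (m' (Fin.last n) : ℝ) := by
      intro j
      have hfr : Int.fract ((m j.castSucc : ℝ) / (m (Fin.last n) : ℝ)) =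
          Int.fract ((m' j.castSucc : ℝ) / (m' (Fin.last n) : ℝ)) := congrFun hgm j
      exact fract_unique' hfr (hbound m hm j).1 (hbound m hm j).2
        (hbound m' hm' j).1 (hbound m' hm' j).2
    have hvec : (fun i => m' (Fin.last n) * m i) = (fun i => m (Fin.last n) * m' i) := by
      funext i
      refine Fin.lastCases (by ring) ?_ i
      intro j
      have := hueq j
      have h2 : (m j.castSucc : ℝ) * (m' (Fin.last n) : ℝ) =
          (m' j.castSucc : ℝ) * (m (Fin.last n) : ℝ) := by
        field_simp at this
        linarith [this]
      have h3 : m j.castSucc * m' (Fin.last n) = m' j.castSucc * m (Fin.last n) := by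
        exact_mod_cast h2
      linarith [h3]
    have hg1 : Finset.univ.gcd (fun i => m' (Fin.last n) * m i) = m' (Fin.last n) := by
      rw [Finset.gcd_mul_left, hm.2.1, mul_one, Int.normalize_of_nonneg hq0'.le]
    have hg2 : Finset.univ.gcd (fun i => m (Fin.last n) * m' i) = m (Fin.last n) := by
      rw [Finset.gcd_mul_left, hm'.2.1, mul_one, Int.normalize_of_nonneg hq0.le]
    have hqq : m' (Fin.last n) = m (Fin.last n) := by rw [← hg1, hvec, hg2]
    funext i
    have := congrFun hvec i
    rw [hqq] at this
    exact mul_left_cancel₀ (ne_of_gt hq0) this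
  -- image equality
  have himg : {r | r ∈ FareySet n Q ∧
      ∃ m : Fin n → ℤ, (fun i => r i + m i) ∈ x +ᵥ S} = g '' R := by
    ext r
    constructor
    · rintro ⟨⟨p, q, hq0, hqQ, hgcd, hrpq, hbox⟩, k, hk⟩
      have hqr : (0 : ℝ) < (q : ℝ) := by exact_mod_cast hq0
      refine ⟨Fin.snoc (fun i => p i + q * k i) q, ⟨?_, ?_, ?_⟩, ?_⟩
      · intro h0
        have := congrFun h0 (Fin.last n)
        rw [Fin.snoc_last] at this
        simp at this
        omega
      · rw [gcd_snoc_add']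
        exact hgcd
      · rw [mem_cone_iff' n Q hn hQpos]
        refine ⟨by rw [Fin.snoc_last]; exact hq0, by rw [Fin.snoc_last]; exact hqQ, ?_⟩
        have hfe : (fun j : Fin n =>
            (((Fin.snoc (fun i => p i + q * k i) q : Fin (n + 1) → ℤ) j.castSucc : ℝ) /
              ((Fin.snoc (fun i => p i + q * k i) q : Fin (n + 1) → ℤ) (Fin.last n) : ℝ))) =
            (fun i : Fin n => r i + (k i : ℝ)) := by
          funext j
          rw [Fin.snoc_castSucc, Fin.snoc_last, hrpq j]
          push_cast
          field_simp
        rw [hfe]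
        exact hk
      · funext i
        show Int.fract _ = r i
        rw [Fin.snoc_castSucc, Fin.snoc_last]
        have heq : ((p i + q * k i : ℤ) : ℝ) / (q : ℝ) = r i + (k i : ℤ) := by
          rw [hrpq i]
          push_cast
          field_simp
        rw [heq, Int.fract_add_intCast, Int.fract_eq_self.2 ⟨(hbox i).1, (hbox i).2⟩]
    · rintro ⟨m, hm, rfl⟩
      obtain ⟨hq0, hqQ, hu⟩ := hRfacts m hm
      have hqr : (0 : ℝ) < (m (Fin.last n) : ℝ) := by exact_mod_cast hq0
      set u : Fin n → ℝ := fun j => (m j.castSucc : ℝ) / (m (Fin.last n) : ℝ) with hu_def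
      refine ⟨⟨fun i => m i.castSucc - m (Fin.last n) * ⌊u i⌋, m (Fin.last n),
        hq0, hqQ, ?_, ?_, ?_⟩, fun i => ⌊u i⌋, ?_⟩
      · have hsnoc : (Fin.snoc (fun i =>
            (m i.castSucc - m (Fin.last n) * ⌊u i⌋) + m (Fin.last n) * ⌊u i⌋)
            (m (Fin.last n)) : Fin (n + 1) → ℤ) = m := by
          funext i
          refine Fin.lastCases ?_ ?_ i
          · rw [Fin.snoc_last]
          · intro j
            rw [Fin.snoc_castSucc]
            ring
        have := gcd_snoc_add' n (fun i => m i.castSucc - m (Fin.last n) * ⌊u i⌋)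
          (fun i => ⌊u i⌋) (m (Fin.last n))
        rw [hsnoc] at this
        rw [← this, hm.2.1]
      · intro i
        show g m i = _
        simp only [hgdef]
        rw [Int.fract]
        push_cast
        field_simp
        rfl
      · intro i
        exact ⟨Int.fract_nonneg _, Int.fract_lt_one _⟩
      · have hfe : (fun i : Fin n => g m i + (⌊u i⌋ : ℝ)) = u := by
          funext i
          simp only [hgdef]
          rw [Int.fract]
          ring
        rw [hfe]
        exact hu
  rw [himg, Set.ncard_image_of_injOn hinj]
end

section
/- Let n=1, s > 0, λ ∈ (0,1], a = 3/(π²s), y = λ^{1/2}, and Δ = {(x₁,x₂) ∈ R² : 0 < x₁ ≤ (π²/3) x₂ λ s, 0 < x₂ ≤ λ^{-1/2}}. Then the Lebesgue measure of the set of x ∈ [0,1) such that no primitive integer vector (p,q) satisfies (p, px+q) ∈ Δ equals: 1 if y ≤ a; 1 − 1/y + a/y² if a < y ≤ a(1−y)^{-1}; and 0 if y > a(1−y)^{-1}. -/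
open MeasureTheory

/-- The triangle Δ_{s,λ} = {(x₁,x₂) : 0 < x₁ ≤ (π²/3)x₂λs, 0 < x₂ ≤ λ^{-1/2}}. -/
def Triangle (s lam : ℝ) : Set (ℝ × ℝ) :=
  {v | 0 < v.1 ∧ v.1 ≤ Real.pi ^ 2 / 3 * v.2 * lam * s ∧ 0 < v.2 ∧ v.2 ≤ (Real.sqrt lam)⁻¹}

/-- The periodized set of good points. -/
lemma hall_S_measurable (α β : ℝ) :
    MeasurableSet {x : ℝ | ∃ k : ℤ, α ≤ x + k ∧ x + k ≤ β} := by
  have h : {x : ℝ | ∃ k : ℤ, α ≤ x + k ∧ x + k ≤ β}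
      = ⋃ k : ℤ, Set.Icc (α - (k : ℝ)) (β - (k : ℝ)) := by
    ext x
    simp only [Set.mem_setOf_eq, Set.mem_iUnion, Set.mem_Icc]
    constructor
    · rintro ⟨k, h1, h2⟩; exact ⟨k, by linarith, by linarith⟩
    · rintro ⟨k, h1, h2⟩; exact ⟨k, by linarith, by linarith⟩
  rw [h]
  exact MeasurableSet.iUnion fun k => measurableSet_Icc

lemma hall_S_vol (α β : ℝ) (hab : α ≤ β) (h1 : β - α ≤ 1) :
    volume ({x : ℝ | ∃ k : ℤ, α ≤ x + k ∧ x + k ≤ β} ∩ Set.Ioc 0 1)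
      = ENNReal.ofReal (β - α) := by
  set S : Set ℝ := {x : ℝ | ∃ k : ℤ, α ≤ x + k ∧ x + k ≤ β} with hS
  have hSm : MeasurableSet S := hall_S_measurable α β
  have hinv : ∀ g : ↥(AddSubgroup.zmultiples (1 : ℝ)),
      (fun x => g +ᵥ x) ⁻¹' S = S := by
    intro g
    obtain ⟨n, hn⟩ := AddSubgroup.mem_zmultiples_iff.mp g.2
    have hgn : (g : ℝ) = n := by rw [← hn]; simp
    ext x
    have hv : g +ᵥ x = (n : ℝ) + x := by
      rw [← hgn]; rfl
    simp only [Set.mem_preimage, hv, hS, Set.mem_setOf_eq]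
    constructor
    · rintro ⟨k, h1, h2⟩
      exact ⟨k + n, by push_cast; linarith, by push_cast; linarith⟩
    · rintro ⟨k, h1, h2⟩
      exact ⟨k - n, by push_cast; linarith, by push_cast; linarith⟩
  have hfd := fun t : ℝ => isAddFundamentalDomain_Ioc (T := 1) one_pos t (volume : Measure ℝ)
  have key : volume (S ∩ Set.Ioc 0 (0 + 1)) = volume (S ∩ Set.Ioc α (α + 1)) :=
    (hfd 0).measure_set_eq (hfd α) hSm hinv
  have h01 : Set.Ioc (0 : ℝ) (0 + 1) = Set.Ioc 0 1 := by norm_num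
  rw [h01] at key
  rw [key]
  apply le_antisymm
  · have hsub : S ∩ Set.Ioc α (α + 1) ⊆ Set.Ioc α β ∪ {α + 1} := by
      rintro x ⟨⟨k, hk1, hk2⟩, hx1, hx2⟩
      rcases lt_trichotomy k 0 with h | h | h
      · have hk : k ≤ -1 := by omega
        have hkR : (k : ℝ) ≤ -1 := by exact_mod_cast hk
        right
        have : x = α + 1 := le_antisymm hx2 (by linarith)
        simp [this]
      · subst h
        left
        push_cast at hk1 hk2
        exact ⟨hx1, by linarith⟩
      · have hk : 1 ≤ k := h
        have hkR : (1 : ℝ) ≤ (k : ℝ) := by exact_mod_cast hk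
        exact absurd hx1 (by push_cast at hk2; simp; linarith)
    calc volume (S ∩ Set.Ioc α (α + 1)) ≤ volume (Set.Ioc α β ∪ {α + 1}) :=
          measure_mono hsub
      _ ≤ volume (Set.Ioc α β) + volume {α + 1} := measure_union_le _ _
      _ = ENNReal.ofReal (β - α) := by simp [Real.volume_Ioc]
  · have hsub : Set.Ioc α β ⊆ S ∩ Set.Ioc α (α + 1) := by
      rintro x ⟨hx1, hx2⟩
      refine ⟨⟨0, by push_cast; linarith, by push_cast; linarith⟩, hx1, by linarith⟩
    calc ENNReal.ofReal (β - α) = volume (Set.Ioc α β) := by rw [Real.volume_Ioc]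
      _ ≤ volume (S ∩ Set.Ioc α (α + 1)) := measure_mono hsub

/-- with a = 3/(π²s), y = λ^{1/2}, the measure of the set of x ∈ [0,1) with no
primitive (p,q) ∈ ℤ² satisfying (p, px+q) ∈ Δ_{s,λ} equals 1 if y ≤ a; 1 − 1/y + a/y² if
a < y ≤ a(1−y)^{-1} (i.e. y(1−y) ≤ a); and 0 if y > a(1−y)^{-1}. -/
theorem hall_measure_formula (s lam : ℝ) (hs : 0 < s) (hlam0 : 0 < lam) (hlam1 : lam ≤ 1) :
    (volume {x ∈ Set.Ico (0 : ℝ) 1 |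
        ¬∃ p q : ℤ, Int.gcd p q = 1 ∧ ((p : ℝ), p * x + q) ∈ Triangle s lam}).toReal =
      (let a := 3 / (Real.pi ^ 2 * s); let y := Real.sqrt lam
        if y ≤ a then 1
        else if y * (1 - y) ≤ a then 1 - 1 / y + a / y ^ 2
        else 0) := by
  have hpi : 0 < Real.pi := Real.pi_pos
  set a : ℝ := 3 / (Real.pi ^ 2 * s) with ha
  set y : ℝ := Real.sqrt lam with hy
  have hy0 : 0 < y := Real.sqrt_pos.2 hlam0
  have hy1 : y ≤ 1 := by
    rw [hy, show (1 : ℝ) = Real.sqrt 1 by simp]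
    exact Real.sqrt_le_sqrt hlam1
  have hyy : y ^ 2 = lam := Real.sq_sqrt hlam0.le
  have ha0 : 0 < a := by rw [ha]; positivity
  set α : ℝ := a / y ^ 2 with hα
  set β : ℝ := 1 / y with hβ
  have hα0 : 0 < α := by rw [hα]; positivity
  have hβ0 : 0 < β := by rw [hβ]; positivity
  have hβ1 : 1 ≤ β := by
    rw [hβ, le_div_iff₀ hy0]; linarith
  set S : Set ℝ := {x : ℝ | ∃ k : ℤ, α ≤ x + k ∧ x + k ≤ β} with hSdef
  have hSm : MeasurableSet S := hall_S_measurable α β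
  -- normalization of the triangle condition
  have htri : ∀ (p q : ℤ) (x : ℝ), ((p : ℝ), (p : ℝ) * x + (q : ℝ)) ∈ Triangle s lam ↔
      (0 < (p : ℝ) ∧ (p : ℝ) * α ≤ (p : ℝ) * x + q ∧ (p : ℝ) * x + q ≤ β) := by
    intro p q x
    have hyne : y ≠ 0 := hy0.ne'
    have hβy : β = (Real.sqrt lam)⁻¹ := by rw [hβ, ← hy, one_div]
    have heq : ∀ t : ℝ, Real.pi ^ 2 / 3 * t * lam * s = t / α := by
      intro t
      rw [hα, ha, ← hyy]
      field_simp
    simp only [Triangle, Set.mem_setOf_eq, ← hβy, heq]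
    constructor
    · rintro ⟨h1, h2, h3, h4⟩
      refine ⟨h1, ?_, h4⟩
      rw [le_div_iff₀ hα0] at h2
      linarith [h2]
    · rintro ⟨h1, h2, h3⟩
      have hpα : 0 < (p : ℝ) * α := mul_pos h1 hα0
      exact ⟨h1, by rw [le_div_iff₀ hα0]; linarith, by linarith, h3⟩
  -- key characterization
  have key : ∀ x : ℝ,
      (∃ p q : ℤ, Int.gcd p q = 1 ∧ ((p : ℝ), (p : ℝ) * x + (q : ℝ)) ∈ Triangle s lam) ↔ x ∈ S := by
    intro x
    constructor
    · rintro ⟨p, q, hgcd, hmem⟩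
      rw [htri] at hmem
      obtain ⟨hp0, hpl, hpu⟩ := hmem
      have hp0' : 0 < p := by exact_mod_cast hp0
      by_cases hp : p = 1
      · subst hp
        refine ⟨q, ?_, ?_⟩ <;> push_cast at hpl hpu ⊢ <;> linarith
      · have hp2 : 2 ≤ p := by omega
        have hpne : p ≠ 0 := by omega
        set r : ℤ := q % p with hr
        have hr0 : 0 ≤ r := Int.emod_nonneg q hpne
        have hrp : r < p := Int.emod_lt_of_pos q hp0'
        have hr1 : 1 ≤ r := by
          rcases eq_or_lt_of_le hr0 with h0 | h0
          · exfalso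
            have hdvd : p ∣ q := Int.dvd_of_emod_eq_zero h0.symm
            have := Int.gcd_eq_left hp0'.le hdvd
            rw [hgcd] at this
            omega
          · omega
        have hq : p * (q / p) + r = q := Int.mul_ediv_add_emod q p
        refine ⟨q / p + 1, ?_, ?_⟩
        · rw [← mul_le_mul_iff_right₀ hp0]
          have hqR : (p : ℝ) * ((q / p : ℤ) : ℝ) + (r : ℝ) = (q : ℝ) := by exact_mod_cast hq
          have hrR : (r : ℝ) < (p : ℝ) := by exact_mod_cast hrp
          push_cast
          nlinarith [hpl]
        · rw [← mul_le_mul_iff_right₀ hp0]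
          have hqR : (p : ℝ) * ((q / p : ℤ) : ℝ) + (r : ℝ) = (q : ℝ) := by exact_mod_cast hq
          have hrR : (1 : ℝ) ≤ (r : ℝ) := by exact_mod_cast hr1
          have hpR : (2 : ℝ) ≤ (p : ℝ) := by exact_mod_cast hp2
          have hnn : (0 : ℝ) ≤ ((p : ℝ) - 1) * (β - 1) :=
            mul_nonneg (by linarith) (by linarith)
          push_cast
          nlinarith [hpu]
    · rintro ⟨k, hk1, hk2⟩
      refine ⟨1, k, Int.one_gcd, (htri 1 k x).2 ⟨by norm_num, ?_, ?_⟩⟩ <;>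
        push_cast <;> linarith
  -- rewrite the bad set
  have hBset : {x ∈ Set.Ico (0 : ℝ) 1 |
      ¬∃ p q : ℤ, Int.gcd p q = 1 ∧ ((p : ℝ), p * x + q) ∈ Triangle s lam}
      = Set.Ico (0 : ℝ) 1 \ S := by
    ext x
    simp only [Set.mem_setOf_eq, Set.mem_diff, key x]
  rw [hBset]
  show _ = if y ≤ a then (1 : ℝ) else if y * (1 - y) ≤ a then 1 - 1 / y + a / y ^ 2 else 0
  rcases le_or_gt y a with hya | hya
  · -- case 1 : measure 1
    rw [if_pos hya]
    have hba : β ≤ α := by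
      rw [hα, hβ, div_le_div_iff₀ hy0 (by positivity)]
      nlinarith
    have hSnull : volume S = 0 := by
      have hsub : S ⊆ ⋃ k : ℤ, {α - (k : ℝ)} := by
        rintro x ⟨k, h1, h2⟩
        have : x = α - k := by linarith
        exact Set.mem_iUnion.2 ⟨k, this⟩
      exact measure_mono_null hsub (measure_iUnion_null fun k => measure_singleton _)
    rw [measure_diff_null hSnull, Real.volume_Ico]
    norm_num
  · rw [if_neg (not_le.2 hya)]
    have hαβ : α ≤ β := by
      rw [hα, hβ, div_le_div_iff₀ (by positivity) hy0]
      nlinarith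
    rcases le_or_gt (y * (1 - y)) a with hcase | hcase
    · -- case 2
      rw [if_pos hcase]
      have h1 : β - α ≤ 1 := by
        rw [hα, hβ]
        rw [div_sub_div _ _ hy0.ne' (by positivity)]
        rw [div_le_one (by positivity)]
        nlinarith
      have hvol : volume (S ∩ Set.Ioc 0 1) = ENNReal.ofReal (β - α) :=
        hall_S_vol α β hαβ h1
      have hico : volume (Set.Ico (0 : ℝ) 1 ∩ S) = ENNReal.ofReal (β - α) := by
        have hae : (Set.Ico (0 : ℝ) 1 ∩ S : Set ℝ) =ᵐ[volume] (Set.Ioc (0 : ℝ) 1 ∩ S : Set ℝ) :=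
          MeasureTheory.ae_eq_set_inter Ico_ae_eq_Ioc (ae_eq_refl _)
        rw [measure_congr hae, Set.inter_comm, hvol]
      have hdiff : Set.Ico (0 : ℝ) 1 \ S = Set.Ico (0 : ℝ) 1 \ (Set.Ico (0 : ℝ) 1 ∩ S) := by
        rw [Set.diff_self_inter]
      rw [hdiff, measure_diff Set.inter_subset_left
        ((measurableSet_Ico.inter hSm).nullMeasurableSet)
        (by rw [hico]; exact ENNReal.ofReal_ne_top)]
      rw [hico, Real.volume_Ico]
      rw [← ENNReal.ofReal_sub _ (by linarith)]
      rw [ENNReal.toReal_ofReal (by linarith)]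
      rw [hα, hβ]
      ring
    · -- case 3
      rw [if_neg (not_le.2 hcase)]
      have h1 : 1 < β - α := by
        rw [hα, hβ]
        rw [div_sub_div _ _ hy0.ne' (by positivity)]
        rw [lt_div_iff₀ (by positivity)]
        nlinarith
      have hSuniv : S = Set.univ := by
        ext x
        simp only [Set.mem_univ, iff_true, hSdef, Set.mem_setOf_eq]
        refine ⟨⌈α - x⌉, ?_, ?_⟩
        · have := Int.le_ceil (α - x); linarith
        · have := Int.ceil_lt_add_one (α - x); linarith
      rw [hSuniv, Set.diff_univ]
      simp
end
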